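/- Let f : [0,∞)² → ℂ be locally Lebesgue integrable. If the double integral ∫₀^∞∫₀^∞ f(u,v) du dv converges regularly, then it converges in Pringsheim's sense (to some I ∈ ℂ). -/

import Mathlib

open MeasureTheory Set

/-- Let `f : [0,∞)² → ℂ` be locally Lebesgue integrable. If the double
integral `∫₀^∞∫₀^∞ f` converges regularly, then it converges in Pringsheim's sense to
some `I ∈ ℂ`. -/
theorem regular_convergence_implies_pringsheim_integral (f : ℝ × ℝ → ℂ)
    (hloc : ∀ a₁ b₁ a₂ b₂ : ℝ, 0 ≤ a₁ → 0 ≤ a₂ →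
      IntegrableOn f (Icc a₁ b₁ ×ˢ Icc a₂ b₂))
    (hreg : ∀ ε : ℝ, 0 < ε → ∃ ρ : ℝ, 0 < ρ ∧ ∀ x x₁ y y₁ : ℝ,
      0 ≤ x → x < x₁ → 0 ≤ y → y < y₁ → ρ < max x y →
      ‖∫ p in Ioc x x₁ ×ˢ Ioc y y₁, f p‖ < ε) :
    ∃ I : ℂ, ∀ ε : ℝ, 0 < ε → ∃ ρ : ℝ, 0 < ρ ∧ ∀ x y : ℝ, ρ < x → ρ < y →
      ‖(∫ p in Ioc (0:ℝ) x ×ˢ Ioc (0:ℝ) y, f p) - I‖ < ε := by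
  -- integrability on `Ioc` rectangles
  have hint : ∀ a₁ b₁ a₂ b₂ : ℝ, 0 ≤ a₁ → 0 ≤ a₂ →
      IntegrableOn f (Ioc a₁ b₁ ×ˢ Ioc a₂ b₂) := fun a₁ b₁ a₂ b₂ h1 h2 =>
    (hloc a₁ b₁ a₂ b₂ h1 h2).mono_set (prod_mono Ioc_subset_Icc_self Ioc_subset_Icc_self)
  set I : ℝ → ℝ → ℂ := fun x y => ∫ p in Ioc (0:ℝ) x ×ˢ Ioc (0:ℝ) y, f p with hI
  -- splitting in the first coordinate
  have hsplitx : ∀ x x₁ y : ℝ, 0 ≤ x → x ≤ x₁ → 0 ≤ y →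
      I x₁ y = I x y + ∫ p in Ioc x x₁ ×ˢ Ioc (0:ℝ) y, f p := by
    intro x x₁ y hx hxx hy
    have hu : Ioc (0:ℝ) x₁ ×ˢ Ioc (0:ℝ) y
        = (Ioc (0:ℝ) x ×ˢ Ioc (0:ℝ) y) ∪ (Ioc x x₁ ×ˢ Ioc (0:ℝ) y) := by
      rw [← union_prod, Ioc_union_Ioc_eq_Ioc hx hxx]
    simp only [hI, hu]
    exact setIntegral_union (Set.Disjoint.set_prod_left (Ioc_disjoint_Ioc_of_le le_rfl) _ _)
      (measurableSet_Ioc.prod measurableSet_Ioc)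
      (hint 0 x 0 y le_rfl le_rfl) (hint x x₁ 0 y hx le_rfl)
  -- splitting in the second coordinate
  have hsplity : ∀ x y y₁ : ℝ, 0 ≤ x → 0 ≤ y → y ≤ y₁ →
      I x y₁ = I x y + ∫ p in Ioc (0:ℝ) x ×ˢ Ioc y y₁, f p := by
    intro x y y₁ hx hy hyy
    have hu : Ioc (0:ℝ) x ×ˢ Ioc (0:ℝ) y₁
        = (Ioc (0:ℝ) x ×ˢ Ioc (0:ℝ) y) ∪ (Ioc (0:ℝ) x ×ˢ Ioc y y₁) := by
      rw [← prod_union, Ioc_union_Ioc_eq_Ioc hy hyy]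
    simp only [hI, hu]
    exact setIntegral_union (Set.Disjoint.set_prod_right (Ioc_disjoint_Ioc_of_le le_rfl) _ _)
      (measurableSet_Ioc.prod measurableSet_Ioc)
      (hint 0 x 0 y le_rfl le_rfl) (hint 0 x y y₁ le_rfl hy)
  -- key Cauchy-type estimate
  have hest : ∀ ε : ℝ, 0 < ε → ∃ ρ : ℝ, 0 < ρ ∧ ∀ x x₁ y y₁ : ℝ,
      ρ < x → x ≤ x₁ → ρ < y → y ≤ y₁ → ‖I x₁ y₁ - I x y‖ ≤ 2 * ε := by
    intro ε hε
    obtain ⟨ρ, hρ, hr⟩ := hreg ε hε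
    refine ⟨ρ, hρ, fun x x₁ y y₁ hx hxx hy hyy => ?_⟩
    have hx0 : (0:ℝ) ≤ x := (hρ.trans hx).le
    have hy0 : (0:ℝ) ≤ y := (hρ.trans hy).le
    have hy1pos : (0:ℝ) < y₁ := (hρ.trans hy).trans_le hyy
    have hx1pos : (0:ℝ) < x := hρ.trans hx
    have e1 : ‖∫ p in Ioc x x₁ ×ˢ Ioc (0:ℝ) y₁, f p‖ ≤ ε := by
      rcases eq_or_lt_of_le hxx with h | h
      · subst h; simpa using hε.le
      · exact (hr x x₁ 0 y₁ hx0 h le_rfl hy1pos (lt_max_iff.mpr (Or.inl hx))).le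
    have e2 : ‖∫ p in Ioc (0:ℝ) x ×ˢ Ioc y y₁, f p‖ ≤ ε := by
      rcases eq_or_lt_of_le hyy with h | h
      · subst h; simpa using hε.le
      · exact (hr 0 x y y₁ le_rfl hx1pos hy0 h (lt_max_iff.mpr (Or.inr hy))).le
    have key : I x₁ y₁ - I x y
        = (∫ p in Ioc x x₁ ×ˢ Ioc (0:ℝ) y₁, f p) + ∫ p in Ioc (0:ℝ) x ×ˢ Ioc y y₁, f p := by
      rw [hsplitx x x₁ y₁ hx0 hxx hy1pos.le, hsplity x y y₁ hx0 hy0 hyy]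
      ring
    calc ‖I x₁ y₁ - I x y‖ ≤ ‖∫ p in Ioc x x₁ ×ˢ Ioc (0:ℝ) y₁, f p‖
          + ‖∫ p in Ioc (0:ℝ) x ×ˢ Ioc y y₁, f p‖ := by rw [key]; exact norm_add_le _ _
      _ ≤ ε + ε := add_le_add e1 e2
      _ = 2 * ε := by ring
  -- the diagonal sequence is Cauchy
  have hcauchy : CauchySeq (fun n : ℕ => I n n) := by
    rw [Metric.cauchySeq_iff]
    intro ε hε
    obtain ⟨ρ, hρ, h⟩ := hest (ε / 3) (by positivity)
    obtain ⟨N, hN⟩ := exists_nat_gt ρ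
    refine ⟨N, fun m hm n hn => ?_⟩
    have hlt : 2 * (ε / 3) < ε := by linarith
    rcases le_total n m with hmn | hmn
    · have := h n m n m (hN.trans_le (Nat.cast_le.mpr hn)) (Nat.cast_le.mpr hmn)
        (hN.trans_le (Nat.cast_le.mpr hn)) (Nat.cast_le.mpr hmn)
      rw [dist_eq_norm]
      exact lt_of_le_of_lt this hlt
    · have := h m n m n (hN.trans_le (Nat.cast_le.mpr hm)) (Nat.cast_le.mpr hmn)
        (hN.trans_le (Nat.cast_le.mpr hm)) (Nat.cast_le.mpr hmn)
      rw [dist_eq_norm, ← norm_neg, neg_sub]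
      exact lt_of_le_of_lt this hlt
  obtain ⟨L, hL⟩ := cauchySeq_tendsto_of_complete hcauchy
  refine ⟨L, fun ε hε => ?_⟩
  obtain ⟨ρ, hρ, h⟩ := hest (ε / 4) (by positivity)
  refine ⟨ρ, hρ, fun x y hx hy => ?_⟩
  obtain ⟨N, hN⟩ := (Metric.tendsto_atTop.mp hL) (ε / 4) (by positivity)
  obtain ⟨m, hm⟩ := exists_nat_ge (max x y)
  set n : ℕ := max N m with hn
  have hxn : x ≤ (n : ℝ) :=
    le_trans (le_max_left x y) (hm.trans (Nat.cast_le.mpr (le_max_right N m)))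
  have hyn : y ≤ (n : ℝ) :=
    le_trans (le_max_right x y) (hm.trans (Nat.cast_le.mpr (le_max_right N m)))
  have h1 : ‖I n n - I x y‖ ≤ 2 * (ε / 4) := h x n y n hx hxn hy hyn
  have h2 : ‖I n n - L‖ < ε / 4 := by
    have := hN n (le_max_left N m)
    rwa [dist_eq_norm] at this
  calc ‖I x y - L‖ = ‖(I n n - L) - (I n n - I x y)‖ := by ring_nf
    _ ≤ ‖I n n - L‖ + ‖I n n - I x y‖ := norm_sub_le _ _
    _ < ε / 4 + 2 * (ε / 4) := add_lt_add_of_lt_of_le h2 h1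
    _ < ε := by linarith
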